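/- The space ω₁ of countable ordinals with the order topology is Stäckel-compact, i.e., there is a linear order ≺ on ω₁ (different from the usual ordinal order) such that every non-empty closed subset of ω₁ has both a ≺-least and a ≺-greatest element. -/

import Mathlib

open Ordinal

universe u

namespace StackelAux

open Set Cardinal

/-- A "club" subset of `ω₁`: contained in `Iio ω₁`, unbounded, and closed under suprema. -/
def Club (C : Set Ordinal.{u}) : Prop :=
  C ⊆ Set.Iio ω₁ ∧ (∀ γ < ω₁, ∃ c ∈ C, γ < c) ∧
    ∀ t ⊆ C, t.Nonempty → sSup t < ω₁ → sSup t ∈ C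

theorem omega1_isLimit : Order.IsSuccLimit (ω₁ : Ordinal.{u}) := by
  rw [← Cardinal.ord_aleph]; exact Cardinal.isSuccLimit_ord (Cardinal.aleph0_le_aleph 1)

theorem iSup_lt_omega1 (f : ℕ → Ordinal.{u}) (hf : ∀ n, f n < ω₁) : iSup f < ω₁ := by
  have h : ∀ n, f n < (Cardinal.aleph 1).ord := by
    intro n; rw [Cardinal.ord_aleph]; exact hf n
  exact Ordinal.iSup_lt_omega_one hf

theorem isLimit_iSup_strictMono (g : ℕ → Ordinal.{u}) (hg : StrictMono g) :
    Order.IsSuccLimit (iSup g) := by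
  rw [Ordinal.isSuccLimit_iff]
  constructor
  · have h01 : g 0 < g 1 := hg Nat.zero_lt_one
    have h1 : g 1 ≤ iSup g := Ordinal.le_iSup g 1
    exact ((show (0:Ordinal) ≤ g 0 by simp).trans_lt (h01.trans_le h1)).ne'
  · apply Order.isSuccPrelimit_of_succ_lt; intro a ha
    obtain ⟨k, hk⟩ := Ordinal.lt_iSup_iff.1 ha
    have h1 : Order.succ a ≤ g k := Order.succ_le_of_lt hk
    exact h1.trans_lt ((hg (Nat.lt_succ_self k)).trans_le (Ordinal.le_iSup g (k + 1)))

theorem countable_Iio {δ : Ordinal.{u}} (hδ : δ < ω₁) : Countable (Set.Iio δ) := by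
  have h1 : #(Set.Iio δ) = Cardinal.lift.{u+1} δ.card := Ordinal.mk_Iio_ordinal δ
  have h2 : δ.card < Cardinal.aleph 1 := by
    rw [← Cardinal.lt_ord, Cardinal.ord_aleph]; exact hδ
  have h3 : #(Set.Iio δ) < Cardinal.aleph 1 := by
    rw [h1]
    have := Cardinal.lift_lt.{u, u+1}.2 h2
    rwa [Cardinal.lift_aleph, Ordinal.lift_one] at this
  exact ((Cardinal.countable_iff_lt_aleph_one _).2 h3).to_subtype

theorem sSup_eq_iSup_of_between {g : ℕ → Ordinal.{u}} {t : Set Ordinal.{u}}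
    (hbdd : BddAbove t) (h1 : ∀ y ∈ t, y ≤ iSup g) (h2 : ∀ k, ∃ y ∈ t, g k ≤ y)
    (hne : t.Nonempty) : sSup t = iSup g := by
  apply le_antisymm
  · exact csSup_le hne h1
  · apply Ordinal.iSup_le
    intro k
    obtain ⟨y, hy, hgy⟩ := h2 k
    exact hgy.trans (le_csSup hbdd hy)

theorem Club.iInter_club {ι : Type v} [Countable ι] [Nonempty ι] {C : ι → Set Ordinal.{u}}
    (h : ∀ i, Club (C i)) : Club (⋂ i, C i) := by
  classical
  obtain ⟨e, he⟩ := exists_surjective_nat ι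
  choose nxtf hmem hgt using fun (i : ι) (x : Set.Iio (ω₁ : Ordinal.{u})) => (h i).2.1 x.1 x.2
  have hnxt_lt : ∀ i x, nxtf i x < ω₁ := fun i x => (h i).1 (hmem i x)
  refine ⟨?_, ?_, ?_⟩
  · exact (Set.iInter_subset C (Classical.arbitrary ι)).trans (h _).1
  · intro γ hγ
    -- iterate the step function
    set step : Set.Iio (ω₁ : Ordinal.{u}) → Set.Iio (ω₁ : Ordinal.{u}) := fun x =>
      ⟨iSup (fun m => nxtf (e m) x), iSup_lt_omega1 _ (fun m => hnxt_lt (e m) x)⟩ with hstep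
    have hstep_gt : ∀ x, x.1 < (step x).1 := fun x =>
      (hgt (e 0) x).trans_le (Ordinal.le_iSup (fun m => nxtf (e m) x) 0)
    set g : ℕ → Set.Iio (ω₁ : Ordinal.{u}) := fun k => step^[k] ⟨γ, hγ⟩ with hg
    have hgsucc : ∀ k, g (k + 1) = step (g k) := fun k => Function.iterate_succ_apply' step k _
    have hgmono : StrictMono (fun k => (g k).1) := by
      apply strictMono_nat_of_lt_succ
      intro k; rw [hgsucc]; exact hstep_gt (g k)
    set δ : Ordinal.{u} := iSup (fun k => (g k).1) with hδ
    have hδω : δ < ω₁ := iSup_lt_omega1 _ (fun k => (g k).2)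
    have hγδ : γ < δ := by
      have : γ = (g 0).1 := rfl
      rw [this]
      exact (hgmono Nat.zero_lt_one).trans_le (Ordinal.le_iSup (fun k => (g k).1) 1)
    refine ⟨δ, ?_, hγδ⟩
    rw [Set.mem_iInter]
    intro i
    obtain ⟨m, rfl⟩ := he i
    set t : Set Ordinal.{u} := Set.range (fun k => nxtf (e m) (g k)) with htdef
    have htC : t ⊆ C (e m) := by rintro x ⟨k, rfl⟩; exact hmem (e m) (g k)
    have hne : t.Nonempty := ⟨nxtf (e m) (g 0), 0, rfl⟩
    have hbdd : BddAbove t := ⟨ω₁, by rintro x ⟨k, rfl⟩; exact (hnxt_lt _ _).le⟩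
    have hsup : sSup t = δ := by
      apply sSup_eq_iSup_of_between hbdd _ _ hne
      · rintro y ⟨k, rfl⟩
        have h1 : nxtf (e m) (g k) ≤ (step (g k)).1 :=
          Ordinal.le_iSup (fun m' => nxtf (e m') (g k)) m
        rw [← hgsucc] at h1
        exact h1.trans (Ordinal.le_iSup (fun k' => (g k').1) (k + 1))
      · intro k
        exact ⟨nxtf (e m) (g k), ⟨k, rfl⟩, (hgt (e m) (g k)).le⟩
    have := (h (e m)).2.2 t htC hne (by rw [hsup]; exact hδω)
    rwa [hsup] at this
  · intro t htsub hne hω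
    rw [Set.mem_iInter]
    intro i
    exact (h i).2.2 t (htsub.trans (Set.iInter_subset C i)) hne hω

theorem Club.tail_mem {C : Set Ordinal.{u}} (hC : Club C) {g : ℕ → Ordinal.{u}}
    (hmono : StrictMono g) (hlt : ∀ k, g k < ω₁) {k0 : ℕ} (hmem : ∀ m, k0 ≤ m → g m ∈ C) :
    iSup g ∈ C := by
  set t : Set Ordinal.{u} := {x | ∃ m, k0 ≤ m ∧ g m = x} with ht
  have htC : t ⊆ C := by rintro x ⟨m, hm, rfl⟩; exact hmem m hm
  have hne : t.Nonempty := ⟨g k0, k0, le_rfl, rfl⟩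
  have hbdd : BddAbove t := ⟨iSup g, by rintro x ⟨m, hm, rfl⟩; exact Ordinal.le_iSup g m⟩
  have hsup : sSup t = iSup g := by
    apply sSup_eq_iSup_of_between hbdd _ _ hne
    · rintro y ⟨m, hm, rfl⟩; exact Ordinal.le_iSup g m
    · intro k
      exact ⟨g (max k k0), ⟨max k k0, le_max_right _ _, rfl⟩, hmono.monotone (le_max_left _ _)⟩
  have hω : sSup t < ω₁ := by rw [hsup]; exact iSup_lt_omega1 g hlt
  have := hC.2.2 t htC hne hω
  rwa [hsup] at this

theorem Club.exists_isLimit {C : Set Ordinal.{u}} (hC : Club C) (γ : Ordinal.{u})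
    (hγ : γ < ω₁) : ∃ δ ∈ C, γ < δ ∧ Order.IsSuccLimit δ := by
  classical
  choose nxtf hmem hgt using fun (x : Set.Iio (ω₁ : Ordinal.{u})) => hC.2.1 x.1 x.2
  set step : Set.Iio (ω₁ : Ordinal.{u}) → Set.Iio (ω₁ : Ordinal.{u}) := fun x =>
    ⟨nxtf x, hC.1 (hmem x)⟩ with hstep
  set g : ℕ → Set.Iio (ω₁ : Ordinal.{u}) := fun k => step^[k] ⟨γ, hγ⟩ with hg
  have hgsucc : ∀ k, g (k + 1) = step (g k) := fun k => Function.iterate_succ_apply' step k _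
  have hgmono : StrictMono (fun k => (g k).1) := by
    apply strictMono_nat_of_lt_succ
    intro k; rw [hgsucc]; exact hgt (g k)
  set δ : Ordinal.{u} := iSup (fun k => (g k).1) with hδ
  have hδC : δ ∈ C := by
    apply hC.tail_mem hgmono (fun k => (g k).2) (k0 := 1)
    intro m hm
    obtain ⟨m', rfl⟩ := Nat.exists_eq_add_of_le hm
    rw [Nat.add_comm, hgsucc]
    exact hmem (g m')
  refine ⟨δ, hδC, ?_, isLimit_iSup_strictMono _ hgmono⟩
  have : γ = (g 0).1 := rfl
  rw [this]
  exact (hgmono Nat.zero_lt_one).trans_le (Ordinal.le_iSup (fun k => (g k).1) 1)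

theorem exists_cofinal_seq : ∀ δ : Ordinal.{u}, ∃ f : ℕ → Ordinal.{u},
    δ < ω₁ → Order.IsSuccLimit δ → (∀ n, f n < δ) ∧ ∀ β < δ, ∃ n, β ≤ f n := by
  intro δ
  by_cases h : δ < ω₁ ∧ Order.IsSuccLimit δ
  · obtain ⟨hδ, hlim⟩ := h
    haveI : Countable (Set.Iio δ) := countable_Iio hδ
    haveI : Nonempty (Set.Iio δ) := ⟨⟨0, hlim.pos⟩⟩
    obtain ⟨e, he⟩ := exists_surjective_nat (Set.Iio δ)
    refine ⟨fun n => (e n).1, fun _ _ => ⟨fun n => (e n).2, ?_⟩⟩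
    intro β hβ
    obtain ⟨n, hn⟩ := he ⟨β, hβ⟩
    have : (e n).1 = β := by rw [hn]
    exact ⟨n, this.ge⟩
  · exact ⟨fun _ => 0, fun h1 h2 => absurd ⟨h1, h2⟩ h⟩

theorem exists_stat : ∃ S : Set Ordinal.{u}, S ⊆ Set.Iio ω₁ ∧
    (∀ C, Club C → (C ∩ S).Nonempty) ∧ (∀ C, Club C → (C \ S).Nonempty) := by
  classical
  choose F hF using exists_cofinal_seq.{u}
  -- the candidate stationary sets
  set T : ℕ → Ordinal.{u} → Set Ordinal.{u} :=
    fun n β => {δ | δ < ω₁ ∧ Order.IsSuccLimit δ ∧ β ≤ F δ n} with hT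
  have claim1 : ∃ n : ℕ, ∀ β < ω₁, ∀ C, Club C → (C ∩ T n β).Nonempty := by
    by_contra hcon
    push_neg at hcon
    have hcon' : ∀ n : ℕ, ∃ β, β < ω₁ ∧ ∃ C, Club C ∧ C ∩ T n β = ∅ := by
      intro n
      obtain ⟨β, hβ, C, hC, hemp⟩ := hcon n
      exact ⟨β, hβ, C, hC, hemp⟩
    choose β hβlt Cf hCf hdisj using hcon'
    have hD : Club (⋂ n, Cf n) := Club.iInter_club hCf
    set B : Ordinal.{u} := iSup β with hB
    have hBω : B < ω₁ := iSup_lt_omega1 β hβlt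
    obtain ⟨δ, hδD, hBδ, hδlim⟩ := hD.exists_isLimit B hBω
    have hδω : δ < ω₁ := hD.1 hδD
    have hlt : ∀ n, F δ n < β n := by
      intro n
      have hδn : δ ∈ Cf n := Set.mem_iInter.1 hδD n
      by_contra hge
      push_neg at hge
      have : δ ∈ Cf n ∩ T n (β n) := ⟨hδn, hδω, hδlim, hge⟩
      rw [hdisj n] at this
      exact this
    obtain ⟨m, hm⟩ := (hF δ hδω hδlim).2 B hBδ
    exact absurd (hm.trans_lt ((hlt m).trans_le (Ordinal.le_iSup β m))) (lt_irrefl B)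
  obtain ⟨n, hn⟩ := claim1
  have claim2 : ∃ β, β < ω₁ ∧ ∀ C, Club C → (C \ T n β).Nonempty := by
    by_contra hcon
    push_neg at hcon
    have hcon' : ∀ β : Set.Iio (ω₁ : Ordinal.{u}), ∃ C, Club C ∧ C ⊆ T n β.1 := by
      intro β
      obtain ⟨C, hC, hemp⟩ := hcon β.1 β.2
      exact ⟨C, hC, Set.diff_eq_empty.1 hemp⟩
    choose Cf hclub hsub using hcon'
    -- step function for the diagonal argument
    have hstep : ∀ x : Set.Iio (ω₁ : Ordinal.{u}), ∃ y : Set.Iio (ω₁ : Ordinal.{u}),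
        x.1 < y.1 ∧ ∀ β : Set.Iio (ω₁ : Ordinal.{u}), β.1 ≤ x.1 → y.1 ∈ Cf β := by
      intro x
      haveI : Nonempty (Set.Iic x.1) := ⟨⟨0, by simp⟩⟩
      haveI : Countable (Set.Iic x.1) := by
        have hsucc : (Order.succ x.1 : Ordinal.{u}) < ω₁ := omega1_isLimit.succ_lt x.2
        have := countable_Iio hsucc
        rwa [Order.Iio_succ] at this
      have hDX : Club (⋂ b : Set.Iic x.1, Cf ⟨b.1, Set.mem_Iio.mpr (b.2.trans_lt x.2)⟩) :=
        Club.iInter_club (fun b => hclub _)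
      obtain ⟨c, hc, hxc⟩ := hDX.2.1 x.1 x.2
      refine ⟨⟨c, hDX.1 hc⟩, hxc, ?_⟩
      intro β hβ
      have := Set.mem_iInter.1 hc ⟨β.1, hβ⟩
      convert this using 2
    choose stepf hstep1 hstep2 using hstep
    have h1ω : (1 : Ordinal.{u}) < ω₁ := Ordinal.one_lt_of_isSuccLimit omega1_isLimit
    set g : ℕ → Set.Iio (ω₁ : Ordinal.{u}) := fun k => stepf^[k] ⟨1, h1ω⟩ with hg
    have hgsucc : ∀ k, g (k + 1) = stepf (g k) := fun k => Function.iterate_succ_apply' stepf k _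
    have hgmono : StrictMono (fun k => (g k).1) := by
      apply strictMono_nat_of_lt_succ
      intro k; rw [hgsucc]; exact hstep1 (g k)
    set δ : Ordinal.{u} := iSup (fun k => (g k).1) with hδ
    have hδω : δ < ω₁ := iSup_lt_omega1 _ (fun k => (g k).2)
    have hmem : ∀ β (hβ : β < δ), δ ∈ T n β := by
      intro β hβ
      have hβω : β < ω₁ := hβ.trans hδω
      obtain ⟨k, hk⟩ := Ordinal.lt_iSup_iff.1 hβ
      have htail : ∀ m, k + 1 ≤ m → (g m).1 ∈ Cf ⟨β, hβω⟩ := by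
        intro m hm
        obtain ⟨m', rfl⟩ := Nat.exists_eq_add_of_le hm
        have hle : β ≤ (g (k + m')).1 := hk.le.trans (hgmono.monotone (Nat.le_add_right k m'))
        rw [Nat.add_right_comm k 1 m', hgsucc]
        exact hstep2 (g (k + m')) ⟨β, hβω⟩ hle
      exact hsub ⟨β, hβω⟩ ((hclub ⟨β, hβω⟩).tail_mem hgmono (fun k => (g k).2) htail)
    have h0δ : (0 : Ordinal.{u}) < δ :=
      ((show (0:Ordinal.{u}) ≤ (g 0).1 by simp).trans_lt (hgmono Nat.zero_lt_one)).trans_le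
        (Ordinal.le_iSup (fun k => (g k).1) 1)
    have hδlim : Order.IsSuccLimit δ := (hmem 0 h0δ).2.1
    have hFδ : F δ n < δ := (hF δ hδω hδlim).1 n
    have hsucc : Order.succ (F δ n) < δ := hδlim.succ_lt hFδ
    have := (hmem _ hsucc).2.2
    exact absurd (Order.succ_le_iff.1 this) (lt_irrefl _)
  obtain ⟨β, hβω, hco⟩ := claim2
  refine ⟨T n β, fun δ hδ => hδ.1, fun C hC => hn β hβω C hC, hco⟩

end StackelAux

def StackelCompact (X : Type*) [TopologicalSpace X] : Prop :=
  ∃ r : X → X → Prop, IsLinearOrder X r ∧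
    ∀ F : Set X, IsClosed F → F.Nonempty →
      (∃ a ∈ F, ∀ x ∈ F, r a x) ∧ (∃ b ∈ F, ∀ x ∈ F, r x b)

/-- The space ω₁ of countable ordinals with the order topology is Stäckel-compact. -/
theorem omega1_stackelCompact :
    @StackelCompact (Set.Iio ω₁ : Set Ordinal)
      (Preorder.topology (Set.Iio ω₁ : Set Ordinal)) := by
  classical
  obtain ⟨S, hS1, hS2, hS3⟩ := StackelAux.exists_stat
  letI : TopologicalSpace (Set.Iio ω₁ : Set Ordinal) := Preorder.topology _
  haveI : OrderTopology (Set.Iio ω₁ : Set Ordinal) := ⟨rfl⟩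
  set r : (Set.Iio ω₁ : Set Ordinal) → (Set.Iio ω₁ : Set Ordinal) → Prop := fun x y =>
    (↑x ∉ S ∧ ↑y ∈ S) ∨ (↑x ∉ S ∧ ↑y ∉ S ∧ x ≤ y) ∨ (↑x ∈ S ∧ ↑y ∈ S ∧ y ≤ x) with hr
  have hrefl : ∀ a, r a a := by
    intro a
    by_cases ha : ↑a ∈ S
    · exact Or.inr (Or.inr ⟨ha, ha, le_rfl⟩)
    · exact Or.inr (Or.inl ⟨ha, ha, le_rfl⟩)
  have htrans : ∀ a b c, r a b → r b c → r a c := by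
    intro a b c hab hbc
    rcases hab with ⟨ha, hb⟩ | ⟨ha, hb, h1⟩ | ⟨ha, hb, h1⟩ <;>
      rcases hbc with ⟨hb', hc⟩ | ⟨hb', hc, h2⟩ | ⟨hb', hc, h2⟩ <;>
      first
      | exact absurd hb hb'
      | exact absurd hb' hb
      | exact Or.inl ⟨ha, hc⟩
      | exact Or.inr (Or.inl ⟨ha, hc, h1.trans h2⟩)
      | exact Or.inr (Or.inr ⟨ha, hc, h2.trans h1⟩)
  have hanti : ∀ a b, r a b → r b a → a = b := by
    intro a b hab hba
    rcases hab with ⟨ha, hb⟩ | ⟨ha, hb, h1⟩ | ⟨ha, hb, h1⟩ <;>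
      rcases hba with ⟨hb', ha'⟩ | ⟨hb', ha', h2⟩ | ⟨hb', ha', h2⟩ <;>
      first
      | exact absurd ha ha'
      | exact absurd ha' ha
      | exact absurd hb hb'
      | exact absurd hb' hb
      | exact le_antisymm h1 h2
      | exact le_antisymm h2 h1
  have htotal : ∀ a b, r a b ∨ r b a := by
    intro a b
    by_cases ha : ↑a ∈ S <;> by_cases hb : ↑b ∈ S
    · rcases le_total b a with h | h
      · exact Or.inl (Or.inr (Or.inr ⟨ha, hb, h⟩))
      · exact Or.inr (Or.inr (Or.inr ⟨hb, ha, h⟩))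
    · exact Or.inr (Or.inl ⟨hb, ha⟩)
    · exact Or.inl (Or.inl ⟨ha, hb⟩)
    · rcases le_total a b with h | h
      · exact Or.inl (Or.inr (Or.inl ⟨ha, hb, h⟩))
      · exact Or.inr (Or.inr (Or.inl ⟨hb, ha, h⟩))
  refine ⟨r, { refl := hrefl, trans := htrans, antisymm := hanti, total := htotal }, ?_⟩
  intro F hFc hFne
  -- a closed set that is bounded above has a greatest element (in the usual order)
  have hbddmax : (∃ b : (Set.Iio ω₁ : Set Ordinal), ∀ x ∈ F, x ≤ b) →
      ∃ m ∈ F, ∀ x ∈ F, x ≤ m := by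
    rintro ⟨b, hb⟩
    have hbdd : BddAbove (Subtype.val '' F) :=
      ⟨b.1, by rintro _ ⟨x, hx, rfl⟩; exact Subtype.coe_le_coe.2 (hb x hx)⟩
    have hne' : (Subtype.val '' F).Nonempty := hFne.image _
    have ha0 : sSup (Subtype.val '' F) < ω₁ :=
      lt_of_le_of_lt
        (csSup_le hne' (by rintro _ ⟨x, hx, rfl⟩; exact Subtype.coe_le_coe.2 (hb x hx)))
        (Set.mem_Iio.1 b.2)
    set a : (Set.Iio ω₁ : Set Ordinal) := ⟨sSup (Subtype.val '' F), ha0⟩ with hadef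
    have hlub : IsLUB F a := by
      refine ⟨fun x hx => ?_, fun c hc => ?_⟩
      · exact Subtype.coe_le_coe.1 (le_csSup hbdd ⟨x, hx, rfl⟩)
      · refine Subtype.coe_le_coe.1 (csSup_le hne' ?_)
        rintro _ ⟨x, hx, rfl⟩
        exact Subtype.coe_le_coe.2 (hc hx)
    have haF : a ∈ F := hlub.mem_of_isClosed hFne hFc
    exact ⟨a, haF, fun x hx => hlub.1 hx⟩
  -- a closed unbounded set gives a club of ordinals
  have hclub : (∀ b : (Set.Iio ω₁ : Set Ordinal), ∃ x ∈ F, b < x) →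
      StackelAux.Club (Subtype.val '' F) := by
    intro hu
    refine ⟨?_, ?_, ?_⟩
    · rintro _ ⟨x, hx, rfl⟩; exact x.2
    · intro γ hγ
      obtain ⟨x, hx, hlt⟩ := hu ⟨γ, hγ⟩
      exact ⟨x.1, ⟨x, hx, rfl⟩, Subtype.coe_lt_coe.2 hlt⟩
    · intro t hts htne ha0
      set a : (Set.Iio ω₁ : Set Ordinal) := ⟨sSup t, ha0⟩ with hadef
      have hF'ne : ({x | x ∈ F ∧ ↑x ∈ t} : Set (Set.Iio ω₁ : Set Ordinal)).Nonempty := by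
        obtain ⟨y, hy⟩ := htne
        obtain ⟨x, hx, rfl⟩ := hts hy
        exact ⟨x, hx, hy⟩
      have hbdd : BddAbove t := ⟨ω₁, fun y hy => by
        obtain ⟨x, _, rfl⟩ := hts hy; exact (Set.mem_Iio.1 x.2).le⟩
      have hlub : IsLUB {x | x ∈ F ∧ ↑x ∈ t} a := by
        refine ⟨fun x hx => ?_, fun c hc => ?_⟩
        · exact Subtype.coe_le_coe.1 (le_csSup hbdd hx.2)
        · refine Subtype.coe_le_coe.1 (csSup_le htne ?_)
          intro y hy
          obtain ⟨x, hx, rfl⟩ := hts hy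
          exact Subtype.coe_le_coe.2 (hc ⟨hx, hy⟩)
      have haF : a ∈ F :=
        hFc.closure_subset
          ((closure_mono (fun x hx => hx.1)) (hlub.mem_closure hF'ne))
      exact ⟨a, haF, rfl⟩
  constructor
  · -- r-least element
    by_cases h : ∃ x ∈ F, ↑x ∉ S
    · obtain ⟨x0, hx0F, hx0S⟩ := h
      have hGne : (Subtype.val '' {x | x ∈ F ∧ ↑x ∉ S} : Set Ordinal).Nonempty :=
        ⟨x0.1, x0, ⟨hx0F, hx0S⟩, rfl⟩
      obtain ⟨m0, hm0, hmin⟩ := Ordinal.lt_wf.has_min _ hGne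
      obtain ⟨m, ⟨hmF, hmS⟩, rfl⟩ := hm0
      refine ⟨m, hmF, ?_⟩
      intro x hx
      by_cases hxS : ↑x ∈ S
      · exact Or.inl ⟨hmS, hxS⟩
      · refine Or.inr (Or.inl ⟨hmS, hxS, ?_⟩)
        exact Subtype.coe_le_coe.1 (not_lt.1 (hmin x.1 ⟨x, ⟨hx, hxS⟩, rfl⟩))
    · push_neg at h
      by_cases hu : ∀ b : (Set.Iio ω₁ : Set Ordinal), ∃ x ∈ F, b < x
      · exfalso
        obtain ⟨y, hyF', hyS⟩ := hS3 _ (hclub hu)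
        obtain ⟨x, hxF, rfl⟩ := hyF'
        exact hyS (h x hxF)
      · push_neg at hu
        obtain ⟨b, hb⟩ := hu
        obtain ⟨m, hmF, hmax'⟩ := hbddmax ⟨b, hb⟩
        exact ⟨m, hmF, fun x hx => Or.inr (Or.inr ⟨h m hmF, h x hx, hmax' x hx⟩)⟩
  · -- r-greatest element
    by_cases h : ∃ x ∈ F, ↑x ∈ S
    · obtain ⟨x0, hx0F, hx0S⟩ := h
      have hGne : (Subtype.val '' {x | x ∈ F ∧ ↑x ∈ S} : Set Ordinal).Nonempty :=
        ⟨x0.1, x0, ⟨hx0F, hx0S⟩, rfl⟩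
      obtain ⟨m0, hm0, hmin⟩ := Ordinal.lt_wf.has_min _ hGne
      obtain ⟨m, ⟨hmF, hmS⟩, rfl⟩ := hm0
      refine ⟨m, hmF, ?_⟩
      intro x hx
      by_cases hxS : ↑x ∈ S
      · refine Or.inr (Or.inr ⟨hxS, hmS, ?_⟩)
        exact Subtype.coe_le_coe.1 (not_lt.1 (hmin x.1 ⟨x, ⟨hx, hxS⟩, rfl⟩))
      · exact Or.inl ⟨hxS, hmS⟩
    · push_neg at h
      by_cases hu : ∀ b : (Set.Iio ω₁ : Set Ordinal), ∃ x ∈ F, b < x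
      · exfalso
        obtain ⟨y, hyF', hyS⟩ := hS2 _ (hclub hu)
        obtain ⟨x, hxF, rfl⟩ := hyF'
        exact h x hxF hyS
      · push_neg at hu
        obtain ⟨b, hb⟩ := hu
        obtain ⟨m, hmF, hmax'⟩ := hbddmax ⟨b, hb⟩
        exact ⟨m, hmF, fun x hx => Or.inr (Or.inl ⟨h x hx, h m hmF, hmax' x hx⟩)⟩
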